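/- arXiv:quant-ph/0602057 — 5 statements merged into one kernel-verified Lean document; each statement's English description precedes it below -/
import Mathlib

section
/- The unitarity condition is preserved under passage to the conjugate (mutually unbiased) basis: for every attack E and all l, l' ∈ I, ∑_{s ∈ I} ⟨Ē l s, Ē l' s⟩ = if l = l' then 1 else 0. -/
open scoped ComplexInnerProductSpace ComplexOrder
open Finset

namespace IDT

/-- N-bit strings. -/
abbrev Bits (N : ℕ) := Fin N → ZMod 2

/-- Bitwise dot product `i·k := ∑ n i_n k_n` (lifting bits to naturals). -/
def bdot {N : ℕ} (i k : Bits N) : ℕ := ∑ n, (i n).val * (k n).val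

/-- Eve's attack: unitarity condition on the family of vectors. -/
def Attack {N M : ℕ} (E : Bits N → Bits N → EuclideanSpace ℂ (Fin M)) : Prop :=
  ∀ i k : Bits N, (∑ j : Bits N, ⟪E i j, E k j⟫) = if i = k then 1 else 0

/-- Conjugate-basis vectors `Ē l s := 2^{-N} ∑_{i,j} (-1)^{s·j + i·l} E i j`. -/
noncomputable def Ebar {N M : ℕ} (E : Bits N → Bits N → EuclideanSpace ℂ (Fin M))
    (l s : Bits N) : EuclideanSpace ℂ (Fin M) :=
  (2 ^ N : ℂ)⁻¹ • ∑ i : Bits N, ∑ j : Bits N, ((-1 : ℂ) ^ (bdot s j + bdot i l)) • E i j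

/-- Error distribution of Bob's conjugate-basis outcome. -/
noncomputable def pbar {N M : ℕ} (E : Bits N → Bits N → EuclideanSpace ℂ (Fin M))
    (c : Bits N) : ℝ :=
  (2 ^ N : ℝ)⁻¹ * ∑ i : Bits N, ‖Ebar E i (i + c)‖ ^ 2

/-- `-x log₂ x` (with the convention `0 log₂ 0 = 0`). -/
noncomputable def ent2 (x : ℝ) : ℝ := -(x * Real.logb 2 x)

/-- A POVM on `ℂ^M` with finite outcome set `A`. -/
structure POVM (A : Type*) [Fintype A] (M : ℕ) where
  X : A → Matrix (Fin M) (Fin M) ℂ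
  posSemidef : ∀ a : A, (X a).PosSemidef
  sum_one : ∑ a : A, X a = 1

/-- Eve's outcome probability `p(α|i)`. -/
noncomputable def pOut {N M : ℕ} {A : Type*} [Fintype A]
    (E : Bits N → Bits N → EuclideanSpace ℂ (Fin M)) (P : POVM A M) (a : A) (i : Bits N) : ℝ :=
  (∑ j : Bits N, ⟪E i j, Matrix.toEuclideanLin (P.X a) (E i j)⟫).re

/-- (base-2) Shannon mutual information of a joint distribution. -/
noncomputable def mutualInfo {S T : Type*} [Fintype S] [Fintype T] (p : S → T → ℝ) : ℝ :=
  (∑ s, ent2 (∑ t, p s t)) + (∑ t, ent2 (∑ s, p s t)) - ∑ s, ∑ t, ent2 (p s t)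

/-- Eve's information gain `I(A:E[X]|b)`. -/
noncomputable def infoGain {N M : ℕ} {A : Type*} [Fintype A]
    (E : Bits N → Bits N → EuclideanSpace ℂ (Fin M)) (P : POVM A M) : ℝ :=
  mutualInfo (fun (i : Bits N) (a : A) => (2 ^ N : ℝ)⁻¹ * pOut E P a i)

/-- Elementary tensor of two Euclidean-space vectors. -/
noncomputable def tens {α β : Type*} (u : EuclideanSpace ℂ α) (v : EuclideanSpace ℂ β) :
    EuclideanSpace ℂ (α × β) :=
  (WithLp.equiv 2 ((α × β) → ℂ)).symm (fun p => u p.1 * v p.2)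

/-- Symmetrized attack vectors. -/
noncomputable def Es {N M : ℕ} (E : Bits N → Bits N → EuclideanSpace ℂ (Fin M))
    (i j : Bits N) : EuclideanSpace ℂ (Bits N × Fin M) :=
  (((Real.sqrt (2 ^ N))⁻¹ : ℝ) : ℂ) •
    ∑ m : Bits N, ((-1 : ℂ) ^ bdot m (i + j)) • tens (EuclideanSpace.single m 1) (E (i + m) (j + m))

/-- The operator `|e_m⟩⟨e_m| ⊗ X` as a matrix on `ℂ^{2^N} ⊗ ℂ^M`. -/
def projTens {N M : ℕ} (m : Bits N) (X : Matrix (Fin M) (Fin M) ℂ) :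
    Matrix (Bits N × Fin M) (Bits N × Fin M) ℂ :=
  Matrix.of fun p q => (if p.1 = m ∧ q.1 = m then 1 else 0) * X p.2 q.2

/-- Purification vectors `φ_i`. -/
noncomputable def phi {N M : ℕ} (E : Bits N → Bits N → EuclideanSpace ℂ (Fin M))
    (i : Bits N) : EuclideanSpace ℂ ((Bits N × Fin M) × Bits N) :=
  ∑ j : Bits N, tens (Es E i j) (EuclideanSpace.single (i + j) 1)

/-- Rank-one projection `|ψ⟩⟨ψ|` as a matrix. -/
noncomputable def outer {α : Type*} (ψ : EuclideanSpace ℂ α) : Matrix α α ℂ :=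
  Matrix.of fun x y => ψ x * star (ψ y)

/-- Partial trace over the second tensor factor. -/
noncomputable def ptraceSnd {α β : Type*} [Fintype β] (Θ : Matrix (α × β) (α × β) ℂ) : Matrix α α ℂ :=
  Matrix.of fun i j => ∑ b : β, Θ (i, b) (j, b)

/-- Partial trace over the first tensor factor. -/
noncomputable def ptraceFst {α β : Type*} [Fintype α] (Θ : Matrix (α × β) (α × β) ℂ) : Matrix β β ℂ :=
  Matrix.of fun x y => ∑ a : α, Θ (a, x) (a, y)

-- von Neumann entropy (base 2) of a Hermitian matrix (junk value `0` otherwise).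
open Classical in
noncomputable def vN {n : Type*} [Fintype n] [DecidableEq n] (ρ : Matrix n n ℂ) : ℝ :=
  if h : ρ.IsHermitian then ∑ i, ent2 (h.eigenvalues i) else 0

/-- Classical–quantum state `∑ i p_i |e_i⟩⟨e_i| ⊗ ρ_i`. -/
def cqState {F G : Type*} [DecidableEq F] (p : F → ℝ) (ρ : F → Matrix G G ℂ) :
    Matrix (F × G) (F × G) ℂ :=
  Matrix.of fun x y => if x.1 = y.1 then (p x.1 : ℂ) * ρ x.1 x.2 y.2 else 0


lemma key {N : ℕ} (j j' : Bits N) :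
    ∑ s : Bits N, ((-1:ℂ) ^ (bdot s j + bdot s j')) = if j = j' then 2 ^ N else 0 := by
  have h1 : ∀ s : Bits N, ((-1:ℂ) ^ (bdot s j + bdot s j'))
      = ∏ n, ((-1:ℂ) ^ ((s n).val * ((j n).val + (j' n).val))) := by
    intro s
    rw [Finset.prod_pow_eq_pow_sum]
    congr 1
    simp [bdot, ← Finset.sum_add_distrib, mul_add]
  simp only [h1]
  rw [show (Finset.univ : Finset (Bits N)) = Fintype.piFinset (fun _ => Finset.univ) by
        simp,
      ← Finset.prod_univ_sum (fun _ : Fin N => (Finset.univ : Finset (ZMod 2)))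
        (fun n x => ((-1:ℂ) ^ (x.val * ((j n).val + (j' n).val))))]
  have h2 : ∀ n : Fin N, (∑ x : ZMod 2, ((-1:ℂ) ^ ((x).val * ((j n).val + (j' n).val))))
      = if j n = j' n then 2 else 0 := by
    intro n
    have hz : ∀ x : ZMod 2, x = 0 ∨ x = 1 := by decide
    rcases hz (j n) with h | h <;> rcases hz (j' n) with h' | h' <;>
      rw [h, h'] <;> rw [show (Finset.univ : Finset (ZMod 2)) = {0, 1} from rfl] <;>
      rw [Finset.sum_insert (by decide), Finset.sum_singleton] <;>
      simp [show ZMod.val (1:ZMod 2) = 1 from rfl] <;> norm_num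
  simp only [h2]
  by_cases h : j = j'
  · simp [h]
  · obtain ⟨n, hn⟩ := Function.ne_iff.mp h
    rw [Finset.prod_eq_zero (Finset.mem_univ n) (by simp [hn]), if_neg h]

set_option maxHeartbeats 1000000 in
/-- The unitarity condition is preserved in the conjugate (mutually unbiased) basis. -/
theorem conjugate_unitarity {N M : ℕ} (hN : 1 ≤ N)
    (E : Bits N → Bits N → EuclideanSpace ℂ (Fin M)) (hE : Attack E) (l l' : Bits N) :
    (∑ s : Bits N, ⟪Ebar E l s, Ebar E l' s⟫) = if l = l' then 1 else 0 := by
  set c : ℂ := (2 ^ N : ℂ)⁻¹ with hc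
  have h2N : (2 ^ N : ℂ) ≠ 0 := by positivity
  have hE' : ∀ i k : Bits N, (∑ j : Bits N, ⟪E i j, E k j⟫) = if i = k then 1 else 0 := hE
  have step1 : ∀ s : Bits N, ⟪Ebar E l s, Ebar E l' s⟫
      = c * c * ∑ i : Bits N, ∑ i' : Bits N, ∑ j : Bits N, ∑ j' : Bits N,
          ((-1:ℂ) ^ (bdot s j + bdot s j')) *
            (((-1:ℂ) ^ (bdot i l + bdot i' l')) * ⟪E i j, E i' j'⟫) := by
    intro s
    have hcc : (starRingEnd ℂ) c = c := by
      simp [hc, Complex.conj_ofNat]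
    simp only [Ebar, inner_smul_left, inner_smul_right, sum_inner, inner_sum,
      Finset.mul_sum, hcc, map_pow, map_neg, map_one]
    conv_lhs => enter [2, i']; rw [Finset.sum_comm]
    conv_lhs => rw [Finset.sum_comm]
    conv_lhs => enter [2, i, 2, i']; rw [Finset.sum_comm]
    refine Finset.sum_congr rfl fun i _ => Finset.sum_congr rfl fun i' _ =>
      Finset.sum_congr rfl fun j _ => Finset.sum_congr rfl fun j' _ => ?_
    rw [hc]; simp only [map_pow, map_inv₀, Complex.conj_ofNat, inv_pow]
    ring
  calc (∑ s : Bits N, ⟪Ebar E l s, Ebar E l' s⟫)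
      = c * c * ∑ i : Bits N, ∑ i' : Bits N, ∑ j : Bits N, ∑ j' : Bits N,
          (∑ s : Bits N, ((-1:ℂ) ^ (bdot s j + bdot s j'))) *
            (((-1:ℂ) ^ (bdot i l + bdot i' l')) * ⟪E i j, E i' j'⟫) := by
        simp only [step1]
        rw [← Finset.mul_sum]
        refine congrArg (fun t => c * c * t) ?_
        rw [Finset.sum_comm]
        refine Finset.sum_congr rfl fun i _ => ?_
        rw [Finset.sum_comm]
        refine Finset.sum_congr rfl fun i' _ => ?_
        rw [Finset.sum_comm]
        refine Finset.sum_congr rfl fun j _ => ?_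
        rw [Finset.sum_comm]
        refine Finset.sum_congr rfl fun j' _ => ?_
        rw [Finset.sum_mul]
    _ = c * c * ∑ i : Bits N, ∑ i' : Bits N, (2 ^ N : ℂ) *
          (((-1:ℂ) ^ (bdot i l + bdot i' l')) * ∑ j : Bits N, ⟪E i j, E i' j⟫) := by
        refine congrArg (fun t => c * c * t) ?_
        refine Finset.sum_congr rfl fun i _ => Finset.sum_congr rfl fun i' _ => ?_
        simp only [key, ite_mul, zero_mul, Finset.sum_ite_eq, Finset.mem_univ, if_true,
          Finset.mul_sum]
    _ = c * c * ∑ i : Bits N, (2 ^ N : ℂ) * ((-1:ℂ) ^ (bdot i l + bdot i l')) := by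
        refine congrArg (fun t => c * c * t) ?_
        refine Finset.sum_congr rfl fun i _ => ?_
        simp only [hE', mul_ite, mul_one, mul_zero, Finset.sum_ite_eq, Finset.mem_univ, if_true]
    _ = c * c * ((2 ^ N : ℂ) * ∑ i : Bits N, ((-1:ℂ) ^ (bdot i l + bdot i l'))) := by
        refine congrArg (fun t => c * c * t) ?_
        rw [Finset.mul_sum]
    _ = if l = l' then 1 else 0 := by
        rw [key l l']
        by_cases h : l = l' <;> simp [h, hc] <;> field_simp



end IDT
end

section
/- For every attack E, the family (p̄(c))_{c ∈ I} is a probability distribution: p̄(c) ≥ 0 for every c ∈ I and ∑_{c ∈ I} p̄(c) = 1. -/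
open scoped ComplexInnerProductSpace ComplexOrder
open Finset

namespace IDT

section Aux
variable {N : ℕ}

private lemma valmod : ∀ x y z : ZMod 2,
    ((x+y).val * z.val) % 2 = (x.val*z.val + y.val*z.val) % 2 := by decide

private lemma neg_one_pow_mul_add (x y z : ZMod 2) :
    ((-1:ℂ))^((x+y).val * z.val) = (-1)^(x.val*z.val) * (-1)^(y.val*z.val) := by
  rw [← pow_add, neg_one_pow_eq_pow_mod_two, valmod, ← neg_one_pow_eq_pow_mod_two]

private lemma neg_one_bdot_add_left (i k l : Bits N) :
    ((-1:ℂ))^(bdot (i+k) l) = (-1)^(bdot i l) * (-1)^(bdot k l) := by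
  unfold bdot
  rw [← Finset.prod_pow_eq_pow_sum, ← Finset.prod_pow_eq_pow_sum,
      ← Finset.prod_pow_eq_pow_sum, ← Finset.prod_mul_distrib]
  exact Finset.prod_congr rfl fun n _ => neg_one_pow_mul_add (i n) (k n) (l n)

private lemma bdot_comm (i k : Bits N) : bdot i k = bdot k i :=
  Finset.sum_congr rfl fun n _ => mul_comm _ _

private lemma zmod_add_eq_zero : ∀ x y : ZMod 2, x + y = 0 ↔ x = y := by decide

private lemma addself (a b : Bits N) : a + b = 0 ↔ a = b := by
  constructor
  · intro h; funext n; exact (zmod_add_eq_zero _ _).1 (congrFun h n)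
  · rintro rfl; funext n; exact (zmod_add_eq_zero _ _).2 rfl

private lemma card_bits : Fintype.card (Bits N) = 2 ^ N := by
  simp [Fintype.card_fun]

private lemma val_one_zmod : (1 : ZMod 2).val = 1 := rfl

private lemma val_one_of_ne_zero : ∀ x : ZMod 2, x ≠ 0 → x.val = 1 := by decide

private lemma sum_char (a : Bits N) :
    ∑ l : Bits N, ((-1:ℂ))^(bdot a l) = if a = 0 then (2^N : ℂ) else 0 := by
  split_ifs with h
  · subst h
    have h0 : ∀ l : Bits N, bdot (0 : Bits N) l = 0 := fun l => by
      unfold bdot; simp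
    simp only [h0, pow_zero, Finset.sum_const, Finset.card_univ, card_bits,
      nsmul_eq_mul, mul_one]
    push_cast; ring
  · obtain ⟨n, hn⟩ : ∃ n, a n ≠ 0 := by
      by_contra hc; push_neg at hc; exact h (funext hc)
    set δ : Bits N := fun m => if m = n then 1 else 0 with hδ
    have hδa : bdot a δ = 1 := by
      unfold bdot
      rw [Finset.sum_eq_single n]
      · simp [hδ, val_one_of_ne_zero _ hn, val_one_zmod]
      · intro m _ hm; simp [hδ, hm]
      · intro hm; exact absurd (Finset.mem_univ n) hm
    have key : ∑ l : Bits N, ((-1:ℂ))^(bdot a l)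
        = ∑ l : Bits N, ((-1:ℂ))^(bdot a (δ + l)) :=
      (Fintype.sum_equiv (Equiv.addLeft δ) _ _ (fun l => rfl)).symm
    have step : ∀ l : Bits N, ((-1:ℂ))^(bdot a (δ + l)) = -((-1:ℂ))^(bdot a l) := by
      intro l
      rw [bdot_comm a (δ + l), neg_one_bdot_add_left, bdot_comm δ a, hδa, bdot_comm l a]
      ring
    simp only [step] at key
    have h2 : (∑ l : Bits N, ((-1:ℂ))^(bdot a l)) + (∑ l : Bits N, ((-1:ℂ))^(bdot a l)) = 0 := by
      nth_rewrite 1 [key]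
      rw [Finset.sum_neg_distrib]
      ring
    exact add_self_eq_zero.mp h2

private lemma chi_combine (l s i j k j' : Bits N) :
    ((-1:ℂ))^(bdot s j + bdot i l) * (-1)^(bdot s j' + bdot k l)
      = (-1)^(bdot (j + j') s) * (-1)^(bdot (i + k) l) := by
  rw [pow_add, pow_add, bdot_comm s j, bdot_comm s j',
      neg_one_bdot_add_left j j' s, neg_one_bdot_add_left i k l]
  ring

private lemma expand_inner {M : ℕ} (E : Bits N → Bits N → EuclideanSpace ℂ (Fin M))
    (l s : Bits N) :
    (⟪Ebar E l s, Ebar E l s⟫ : ℂ)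
      = (2^N:ℂ)⁻¹ * (2^N:ℂ)⁻¹ * ∑ q : Bits N × Bits N, ∑ r : Bits N × Bits N,
          (((-1:ℂ))^(bdot (q.2 + r.2) s) * (-1)^(bdot (q.1 + r.1) l))
            * ⟪E r.1 r.2, E q.1 q.2⟫ := by
  unfold Ebar
  rw [inner_smul_left, inner_smul_right]
  simp only [sum_inner, inner_sum, inner_smul_left, inner_smul_right,
    map_pow, map_neg, map_one, map_inv₀, Complex.conj_ofNat,
    Fintype.sum_prod_type, Finset.mul_sum]
  refine Finset.sum_congr rfl fun k _ => Finset.sum_congr rfl fun j' _ =>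
    Finset.sum_congr rfl fun i _ => Finset.sum_congr rfl fun j _ => ?_
  linear_combination ((2^N:ℂ)⁻¹ * (2^N:ℂ)⁻¹ * (⟪E i j, E k j'⟫ : ℂ)) * chi_combine l s k j' i j

set_option maxHeartbeats 1600000 in
private lemma sum_inner_Ebar {M : ℕ} (E : Bits N → Bits N → EuclideanSpace ℂ (Fin M))
    (hE : Attack E) :
    ∑ l : Bits N, ∑ s : Bits N, (⟪Ebar E l s, Ebar E l s⟫ : ℂ) = (2^N : ℂ) := by
  have h2 : (2:ℂ)^N ≠ 0 := by positivity
  calc ∑ l : Bits N, ∑ s : Bits N, (⟪Ebar E l s, Ebar E l s⟫ : ℂ)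
      = ∑ p : Bits N × Bits N, (⟪Ebar E p.1 p.2, Ebar E p.1 p.2⟫ : ℂ) := by
        rw [Fintype.sum_prod_type]
    _ = (2^N:ℂ)⁻¹ * (2^N:ℂ)⁻¹ * ∑ p : Bits N × Bits N, ∑ q : Bits N × Bits N,
          ∑ r : Bits N × Bits N,
          (((-1:ℂ))^(bdot (q.2 + r.2) p.2) * (-1)^(bdot (q.1 + r.1) p.1))
            * ⟪E r.1 r.2, E q.1 q.2⟫ := by
        rw [Finset.mul_sum]
        exact Finset.sum_congr rfl fun p _ => expand_inner E p.1 p.2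
    _ = (2^N:ℂ)⁻¹ * (2^N:ℂ)⁻¹ * ∑ q : Bits N × Bits N, ∑ r : Bits N × Bits N,
          ∑ p : Bits N × Bits N,
          (((-1:ℂ))^(bdot (q.2 + r.2) p.2) * (-1)^(bdot (q.1 + r.1) p.1))
            * ⟪E r.1 r.2, E q.1 q.2⟫ := by
        congr 1
        rw [Finset.sum_comm]
        exact Finset.sum_congr rfl fun q _ => Finset.sum_comm
    _ = (2^N:ℂ)⁻¹ * (2^N:ℂ)⁻¹ * ∑ q : Bits N × Bits N, ∑ r : Bits N × Bits N,
          ((if q.2 + r.2 = 0 then (2^N:ℂ) else 0) * (if q.1 + r.1 = 0 then (2^N:ℂ) else 0))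
            * ⟪E r.1 r.2, E q.1 q.2⟫ := by
        congr 1
        refine Finset.sum_congr rfl fun q _ => Finset.sum_congr rfl fun r _ => ?_
        have hsc : (∑ p : Bits N × Bits N,
              ((-1:ℂ))^(bdot (q.2 + r.2) p.2) * (-1)^(bdot (q.1 + r.1) p.1))
            = (if q.2 + r.2 = 0 then (2^N:ℂ) else 0)
              * (if q.1 + r.1 = 0 then (2^N:ℂ) else 0) := by
          rw [← sum_char (q.2 + r.2), ← sum_char (q.1 + r.1), Finset.sum_mul_sum]
          rw [Fintype.sum_prod_type]
          exact Finset.sum_comm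
        rw [← Finset.sum_mul, hsc]
    _ = (2^N:ℂ)⁻¹ * (2^N:ℂ)⁻¹ * ∑ q : Bits N × Bits N,
          ((2^N:ℂ) * (2^N:ℂ)) * ⟪E q.1 q.2, E q.1 q.2⟫ := by
        congr 1
        refine Finset.sum_congr rfl fun q _ => ?_
        rw [Finset.sum_eq_single q]
        · simp [addself]
        · intro r _ hr
          rcases (em (q.2 = r.2)) with h' | h'
          · have hne : ¬ q.1 = r.1 := fun h1 => hr (Prod.ext h1 h').symm
            simp [addself, hne]
          · simp [addself, h']
        · intro hq; exact absurd (Finset.mem_univ q) hq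
    _ = (2^N : ℂ) := by
        rw [← Finset.mul_sum, Fintype.sum_prod_type]
        have h1 : ∀ i : Bits N, ∑ j : Bits N, (⟪E i j, E i j⟫ : ℂ) = 1 := by
          intro i; rw [hE i i]; simp
        simp only [h1, Finset.sum_const, Finset.card_univ, card_bits, nsmul_eq_mul, mul_one]
        field_simp
        norm_num

end Aux

/-- Bob's conjugate-basis error distribution is a probability distribution. -/
theorem pbar_isProbability {N M : ℕ} (hN : 1 ≤ N)
    (E : Bits N → Bits N → EuclideanSpace ℂ (Fin M)) (hE : Attack E) :
    (∀ c : Bits N, 0 ≤ pbar E c) ∧ (∑ c : Bits N, pbar E c) = 1 := by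
  constructor
  · intro c
    unfold pbar
    positivity
  · have hC := sum_inner_Ebar E hE
    have hre : ∀ l s : Bits N, (⟪Ebar E l s, Ebar E l s⟫ : ℂ) = ((‖Ebar E l s‖ ^ 2 : ℝ) : ℂ) := by
      intro l s
      rw [inner_self_eq_norm_sq_to_K]
      norm_cast
    simp only [hre] at hC
    have hR : ∑ l : Bits N, ∑ s : Bits N, (‖Ebar E l s‖ ^ 2 : ℝ) = (2 : ℝ)^N := by
      have := hC
      rw [show ((2:ℂ)^N) = (((2:ℝ)^N : ℝ) : ℂ) by push_cast; ring] at this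
      exact_mod_cast this
    unfold pbar
    rw [← Finset.mul_sum, Finset.sum_comm]
    have hsum : ∑ i : Bits N, ∑ c : Bits N, (‖Ebar E i (i + c)‖ ^ 2 : ℝ)
        = ∑ l : Bits N, ∑ s : Bits N, (‖Ebar E l s‖ ^ 2 : ℝ) := by
      refine Finset.sum_congr rfl fun i _ => ?_
      exact Fintype.sum_equiv (Equiv.addLeft i) _ _ (fun c => rfl)
    rw [hsum, hR, inv_mul_cancel₀ (by positivity)]


end IDT
end

section
/- The symmetrized attack vectors satisfy the unitarity condition: for every attack E and all i, k ∈ I, ∑_{j ∈ I} ⟨E^s i j, E^s k j⟩ = if i = k then 1 else 0. -/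
open scoped ComplexInnerProductSpace ComplexOrder
open Finset

namespace IDT

lemma tens_inner {α β : Type*} [Fintype α] [Fintype β]
    (u u' : EuclideanSpace ℂ α) (v v' : EuclideanSpace ℂ β) :
    ⟪tens u v, tens u' v'⟫ = ⟪u, u'⟫ * ⟪v, v'⟫ := by
  simp only [tens, PiLp.inner_apply, RCLike.inner_apply, WithLp.equiv_symm_apply, PiLp.toLp_apply]
  rw [Fintype.sum_prod_type, Finset.sum_mul_sum]
  refine Finset.sum_congr rfl fun a _ => Finset.sum_congr rfl fun b _ => ?_
  simp only [map_mul]; ring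

lemma bdot_parity {N : ℕ} (m a b : Bits N) :
    ((-1 : ℂ)) ^ (bdot m a + bdot m b) = (-1 : ℂ) ^ bdot m (a + b) := by
  have h : (bdot m a + bdot m b : ℕ) ≡ bdot m (a + b) [MOD 2] := by
    have : ((bdot m a + bdot m b : ℕ) : ZMod 2) = ((bdot m (a + b) : ℕ) : ZMod 2) := by
      simp only [bdot, Nat.cast_add, Nat.cast_sum, Nat.cast_mul, ZMod.natCast_val,
        ZMod.cast_id]
      rw [← Finset.sum_add_distrib]
      congr 1; ext n
      simp [Pi.add_apply, mul_add]
    exact (ZMod.natCast_eq_natCast_iff _ _ _).mp this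
  rw [neg_one_pow_eq_pow_mod_two, neg_one_pow_eq_pow_mod_two (n := bdot m (a + b)), h]

/-- The symmetrized attack vectors satisfy the unitarity condition. -/
theorem symmetrized_unitarity {N M : ℕ} (hN : 1 ≤ N)
    (E : Bits N → Bits N → EuclideanSpace ℂ (Fin M)) (hE : Attack E) (i k : Bits N) :
    (∑ j : Bits N, ⟪Es E i j, Es E k j⟫) = if i = k then 1 else 0 := by
  classical
  have hc : ((((Real.sqrt (2 ^ N))⁻¹ : ℝ) : ℂ)) * (((Real.sqrt (2 ^ N))⁻¹ : ℝ) : ℂ)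
      = (2 ^ N : ℂ)⁻¹ := by
    rw [← Complex.ofReal_mul, ← mul_inv, Real.mul_self_sqrt (by positivity)]
    push_cast; ring
  have key : ∀ j : Bits N, ⟪Es E i j, Es E k j⟫ =
      (2 ^ N : ℂ)⁻¹ * ∑ m : Bits N, (-1 : ℂ) ^ bdot m (i + k) *
        ⟪E (i + m) (j + m), E (k + m) (j + m)⟫ := by
    intro j
    simp only [Es, inner_smul_left, inner_smul_right, inner_sum, sum_inner,
      smul_eq_mul, tens_inner, map_pow, map_neg, map_one, Complex.conj_ofReal,
      EuclideanSpace.inner_single_left, EuclideanSpace.single_apply, map_one,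
      mul_ite, mul_zero, ite_mul, zero_mul, one_mul, mul_one,
      Finset.mul_sum, Finset.sum_ite_eq', Finset.mem_univ, if_true]
    refine Finset.sum_congr rfl fun m _ => ?_
    have hsum : ((k + j) + (i + j) : Bits N) = i + k := by
      have hj : (j + j : Bits N) = 0 := by
        ext n; exact CharTwo.add_self_eq_zero _
      calc ((k + j) + (i + j) : Bits N) = (i + k) + (j + j) := by abel
        _ = i + k := by rw [hj, add_zero]
    calc (((Real.sqrt (2 ^ N))⁻¹ : ℝ) : ℂ) * ((-1 : ℂ) ^ bdot m (k + j) *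
          ((((Real.sqrt (2 ^ N))⁻¹ : ℝ) : ℂ) * ((-1 : ℂ) ^ bdot m (i + j) *
            ⟪E (i + m) (j + m), E (k + m) (j + m)⟫)))
        = ((((Real.sqrt (2 ^ N))⁻¹ : ℝ) : ℂ) * (((Real.sqrt (2 ^ N))⁻¹ : ℝ) : ℂ)) *
          (((-1 : ℂ) ^ bdot m (k + j) * (-1 : ℂ) ^ bdot m (i + j)) *
            ⟪E (i + m) (j + m), E (k + m) (j + m)⟫) := by ring
      _ = (2 ^ N : ℂ)⁻¹ * ((-1 : ℂ) ^ bdot m (i + k) *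
            ⟪E (i + m) (j + m), E (k + m) (j + m)⟫) := by
          rw [hc, ← pow_add, bdot_parity, hsum]
  rw [Finset.sum_congr rfl fun j _ => key j, ← Finset.mul_sum, Finset.sum_comm]
  have hinner : ∀ m : Bits N, (∑ j : Bits N,
      ⟪E (i + m) (j + m), E (k + m) (j + m)⟫) = if i = k then 1 else 0 := by
    intro m
    have := hE (i + m) (k + m)
    rw [← Equiv.sum_comp (Equiv.addRight m) (fun j => ⟪E (i + m) j, E (k + m) j⟫)] at this
    simp only [Equiv.coe_addRight] at this
    rw [this]
    by_cases h : i = k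
    · simp [h]
    · simp [h, fun hmm : i + m = k + m => h (by simpa using add_right_cancel hmm)]
  rw [Finset.sum_congr rfl fun m _ => by rw [← Finset.mul_sum, hinner m]]
  by_cases h : i = k
  · subst h
    have h0 : (i + i : Bits N) = 0 := by ext n; exact CharTwo.add_self_eq_zero _
    have hb : ∀ m : Bits N, bdot m ((0 : Bits N)) = 0 := by intro m; simp [bdot]
    simp only [if_pos rfl, mul_one, h0, hb, pow_zero]
    rw [Finset.sum_const, Finset.card_univ]
    have hcard : (Fintype.card (Bits N) : ℂ) = 2 ^ N := by
      simp [Bits]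
    simp only [nsmul_eq_mul, if_true, mul_one, one_mul, hcard]
    exact inv_mul_cancel₀ (by positivity)
  · simp [h]

end IDT
end

section
/- Block structure of the symmetrized Eve state: for every attack E, all i, m ∈ I, and every linear operator X on ℂ^M, ∑_{j ∈ I} ⟨E^s i j, (|e_m⟩⟨e_m| ⊗ X)(E^s i j)⟩ = 2^{-N} ∑_{j ∈ I} ⟨E (i⊕m) (j⊕m), X (E (i⊕m) (j⊕m))⟩. In particular, measuring the auxiliary register of the symmetrized state yields each outcome m with probability 2^{-N}, and the conditioned outcome statistics equal those of the original attack with input i⊕m. -/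
open scoped ComplexInnerProductSpace ComplexOrder
open Finset

namespace IDT

lemma tens_apply {α β : Type*} (u : EuclideanSpace ℂ α) (v : EuclideanSpace ℂ β)
    (p : α × β) : tens u v p = u p.1 * v p.2 := rfl

lemma Es_apply {N M : ℕ} (E : Bits N → Bits N → EuclideanSpace ℂ (Fin M)) (i j : Bits N)
    (p : Bits N × Fin M) :
    Es E i j p = (((Real.sqrt (2 ^ N))⁻¹ : ℝ) : ℂ) * ((-1 : ℂ) ^ bdot p.1 (i + j))
      * E (i + p.1) (j + p.1) p.2 := by
  have h1 : Es E i j p = (((Real.sqrt (2 ^ N))⁻¹ : ℝ) : ℂ) *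
      ∑ a : Bits N, ((-1 : ℂ) ^ bdot a (i + j)) *
        (EuclideanSpace.single a (1:ℂ) p.1 * E (i + a) (j + a) p.2) := by
    rw [Es, PiLp.smul_apply, smul_eq_mul, WithLp.ofLp_sum,
      Finset.sum_apply p Finset.univ _]
    simp only [PiLp.smul_apply, smul_eq_mul, tens_apply]
  rw [h1, Finset.sum_eq_single p.1]
  · simp [EuclideanSpace.single_apply, mul_assoc]
  · intro a _ ha
    simp [EuclideanSpace.single_apply, Ne.symm ha]
  · simp

lemma inner_toLin {n : Type*} [Fintype n] [DecidableEq n] (A : Matrix n n ℂ)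
    (u v : EuclideanSpace ℂ n) :
    ⟪u, Matrix.toEuclideanLin A v⟫ = ∑ p, ∑ q, starRingEnd ℂ (u p) * (A p q * v q) := by
  simp [PiLp.inner_apply, Matrix.toEuclideanLin_apply, Matrix.mulVec, dotProduct,
    Finset.mul_sum, Finset.sum_mul, RCLike.inner_apply]
  exact Finset.sum_congr rfl fun _ _ => Finset.sum_congr rfl fun _ _ => by ring

lemma block_key {N M : ℕ} (E : Bits N → Bits N → EuclideanSpace ℂ (Fin M)) (i m j : Bits N)
    (X : Matrix (Fin M) (Fin M) ℂ) :
    ⟪Es E i j, Matrix.toEuclideanLin (projTens m X) (Es E i j)⟫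
      = (2 ^ N : ℂ)⁻¹ * ⟪E (i + m) (j + m), Matrix.toEuclideanLin X (E (i + m) (j + m))⟫ := by
  have hc : (((Real.sqrt (2 ^ N))⁻¹ : ℝ) : ℂ) * (((Real.sqrt (2 ^ N))⁻¹ : ℝ) : ℂ)
      = (2 ^ N : ℂ)⁻¹ := by
    have : (Real.sqrt (2 ^ N))⁻¹ * (Real.sqrt (2 ^ N))⁻¹ = ((2:ℝ) ^ N)⁻¹ := by
      rw [← mul_inv, Real.mul_self_sqrt (by positivity)]
    have h2 := congrArg (Complex.ofReal) this
    push_cast at h2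
    exact_mod_cast h2
  have hσ : ((-1 : ℂ) ^ bdot m (i + j)) * ((-1 : ℂ) ^ bdot m (i + j)) = 1 := by
    rw [← mul_pow]; norm_num
  rw [inner_toLin, inner_toLin]
  simp only [Es_apply, projTens, Matrix.of_apply, Fintype.sum_prod_type, ite_and, ite_mul,
    mul_ite, mul_zero, zero_mul, one_mul, Finset.sum_ite_irrel, Finset.sum_ite_eq',
    Finset.mem_univ, if_true, Finset.sum_const_zero]
  rw [Finset.mul_sum]
  refine Finset.sum_congr rfl fun b _ => ?_
  rw [Finset.mul_sum]
  refine Finset.sum_congr rfl fun b' _ => ?_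
  simp only [map_mul, Complex.conj_ofReal, map_pow, map_neg, map_one]
  set σ := ((-1 : ℂ) ^ bdot m (i + j))
  set c := (((Real.sqrt (2 ^ N))⁻¹ : ℝ) : ℂ)
  set T := starRingEnd ℂ (E (i + m) (j + m) b) * (X b b' * E (i + m) (j + m) b')
  linear_combination (T * σ * σ) * hc + (T * (2 ^ N : ℂ)⁻¹) * hσ

/-- Block structure of the symmetrized Eve state. -/
theorem symmetrized_block_structure {N M : ℕ} (hN : 1 ≤ N)
    (E : Bits N → Bits N → EuclideanSpace ℂ (Fin M)) (hE : Attack E) (i m : Bits N)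
    (X : Matrix (Fin M) (Fin M) ℂ) :
    (∑ j : Bits N, ⟪Es E i j, Matrix.toEuclideanLin (projTens m X) (Es E i j)⟫)
      = (2 ^ N : ℂ)⁻¹ *
        ∑ j : Bits N, ⟪E (i + m) (j + m), Matrix.toEuclideanLin X (E (i + m) (j + m))⟫ := by
  rw [Finset.mul_sum]
  exact Finset.sum_congr rfl fun j _ => block_key E i m j X

end IDT
end

section
/- Quantum mutual entropy of a classical–quantum state equals the Holevo quantity: let F be a finite type, (p_i)_{i ∈ F} a probability distribution, and (ρ_i)_{i ∈ F} density matrices on ℂ^d (positive semidefinite Hermitian with trace 1). For the classical–quantum state Θ := ∑_{i ∈ F} p_i |e_i⟩⟨e_i| ⊗ ρ_i on ℂ^{|F|} ⊗ ℂ^d, with partial traces Θ|_R on ℂ^{|F|} and Θ|_E on ℂ^d, one has S(Θ|_R) + S(Θ|_E) − S(Θ) = S(∑_i p_i ρ_i) − ∑_i p_i S(ρ_i). -/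
open scoped ComplexInnerProductSpace ComplexOrder
open Finset

namespace IDT

section Aux
open Matrix Polynomial

lemma ent2_mul (x y : ℝ) : ent2 (x * y) = x * ent2 y + y * ent2 x := by
  rcases eq_or_ne x 0 with rfl | hx; · simp [ent2]
  rcases eq_or_ne y 0 with rfl | hy; · simp [ent2]
  simp only [ent2, Real.logb, Real.log_mul hx hy]
  ring

lemma charmatrix_conj {n : Type*} [Fintype n] [DecidableEq n] (U D : Matrix n n ℂ)
    (hU : U * star U = 1) :
    charmatrix (U * D * star U) =
      (C : ℂ →+* ℂ[X]).mapMatrix U * charmatrix D * (C : ℂ →+* ℂ[X]).mapMatrix (star U) := by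
  have h1 : (C : ℂ →+* ℂ[X]).mapMatrix U * (C : ℂ →+* ℂ[X]).mapMatrix (star U) = 1 := by
    rw [← _root_.map_mul, hU, _root_.map_one]
  simp only [charmatrix, mul_sub, sub_mul, _root_.map_mul]
  congr 1
  have h2 : ∀ M : Matrix n n ℂ[X], M * Matrix.scalar n (X : ℂ[X]) = Matrix.scalar n (X : ℂ[X]) * M := by
    intro M
    exact (Matrix.scalar_commute (X : ℂ[X]) (Commute.all _) M).symm
  rw [mul_assoc, ← h2, ← mul_assoc, h1, one_mul]

lemma charpoly_conj {n : Type*} [Fintype n] [DecidableEq n] (U D : Matrix n n ℂ)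
    (hU : U * star U = 1) : (U * D * star U).charpoly = D.charpoly := by
  have h1 : ((C : ℂ →+* ℂ[X]).mapMatrix U).det * ((C : ℂ →+* ℂ[X]).mapMatrix (star U)).det = 1 := by
    rw [← det_mul, ← _root_.map_mul, hU, _root_.map_one, det_one]
  unfold Matrix.charpoly
  rw [charmatrix_conj U D hU, det_mul, det_mul]
  ring_nf
  rw [mul_comm, ← mul_assoc, mul_comm (((C : ℂ →+* ℂ[X]).mapMatrix (star U)).det), h1, one_mul]

lemma charpoly_diag {n : Type*} [Fintype n] [DecidableEq n] (a : n → ℂ) :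
    (Matrix.diagonal a).charpoly = ∏ i, (X - C (a i)) := by
  have h : charmatrix (Matrix.diagonal a) = Matrix.diagonal (fun i => (X : ℂ[X]) - C (a i)) := by
    ext i j
    rcases eq_or_ne i j with rfl | hij
    · simp
    · simp [charmatrix_apply_ne _ _ _ hij, Matrix.diagonal_apply_ne _ hij]
  rw [Matrix.charpoly, h, Matrix.det_diagonal]

lemma multiset_map_eq_of_prod {n m : Type*} [Fintype n] [Fintype m] (a : n → ℂ) (b : m → ℂ)
    (h : ∏ i, (X - C (a i)) = ∏ i, (X - C (b i))) :
    Multiset.map a Finset.univ.val = Multiset.map b Finset.univ.val := by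
  have ha := Polynomial.roots_multiset_prod_X_sub_C (Multiset.map a Finset.univ.val)
  have hb := Polynomial.roots_multiset_prod_X_sub_C (Multiset.map b Finset.univ.val)
  rw [Multiset.map_map] at ha hb
  have h1 : ∏ i, (X - C (a i)) = (Multiset.map ((fun r => X - C r) ∘ a) Finset.univ.val).prod := by
    rw [Finset.prod_eq_multiset_prod]; rfl
  rw [h1] at h
  have h2 : ∏ i, (X - C (b i)) = (Multiset.map ((fun r => X - C r) ∘ b) Finset.univ.val).prod := by
    rw [Finset.prod_eq_multiset_prod]; rfl
  rw [h2] at h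
  rw [← ha, ← hb, h]

lemma sum_f_eigenvalues {n : Type*} [Fintype n] [DecidableEq n] {A : Matrix n n ℂ}
    (hA : A.IsHermitian) (U : Matrix n n ℂ) (d : n → ℝ) (hU : U * star U = 1)
    (hAd : A = U * Matrix.diagonal (fun i => (d i : ℂ)) * star U) (f : ℝ → ℝ) :
    ∑ i, f (hA.eigenvalues i) = ∑ i, f (d i) := by
  have hV : (hA.eigenvectorUnitary : Matrix n n ℂ) * star (hA.eigenvectorUnitary : Matrix n n ℂ) = 1 :=
    (Matrix.mem_unitaryGroup_iff).mp hA.eigenvectorUnitary.2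
  have h1 : A.charpoly = ∏ i, (X - C ((hA.eigenvalues i : ℝ) : ℂ)) := by
    conv_lhs => rw [hA.spectral_theorem]
    rw [Unitary.conjStarAlgAut_apply, charpoly_conj _ _ hV, ← charpoly_diag]
    rfl
  have h2 : A.charpoly = ∏ i, (X - C ((d i : ℝ) : ℂ)) := by
    conv_lhs => rw [hAd]
    rw [charpoly_conj _ _ hU, ← charpoly_diag]
  have hms := multiset_map_eq_of_prod _ _ (h1.symm.trans h2)
  have hms' : Multiset.map hA.eigenvalues Finset.univ.val = Multiset.map d Finset.univ.val := by
    apply Multiset.map_injective (f := (Complex.ofReal : ℝ → ℂ)) Complex.ofReal_injective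
    rw [Multiset.map_map, Multiset.map_map]
    exact hms
  calc ∑ i, f (hA.eigenvalues i)
      = (Multiset.map (f ∘ hA.eigenvalues) Finset.univ.val).sum := by
        rw [Finset.sum_eq_multiset_sum]; rfl
    _ = ((Multiset.map hA.eigenvalues Finset.univ.val).map f).sum := by rw [Multiset.map_map]
    _ = ((Multiset.map d Finset.univ.val).map f).sum := by rw [hms']
    _ = ∑ i, f (d i) := by rw [Multiset.map_map, Finset.sum_eq_multiset_sum]; rfl

/-- `vN` of a unitarily diagonalized matrix. -/
lemma vN_of_diag {n : Type*} [Fintype n] [DecidableEq n] {A U : Matrix n n ℂ} {d : n → ℝ}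
    (hU : U * star U = 1) (hAd : A = U * Matrix.diagonal (fun i => (d i : ℂ)) * star U) :
    vN A = ∑ i, ent2 (d i) := by
  have hD : (Matrix.diagonal fun i => ((d i : ℝ) : ℂ)).IsHermitian := by
    have hst : (star fun i => ((d i : ℝ) : ℂ)) = fun i => ((d i : ℝ) : ℂ) := by
      funext i
      simp only [Pi.star_apply, Complex.star_def]
      exact Complex.conj_ofReal (d i)
    rw [Matrix.IsHermitian, Matrix.diagonal_conjTranspose, hst]
  have hA : A.IsHermitian := by
    rw [hAd, Matrix.IsHermitian, Matrix.star_eq_conjTranspose, Matrix.conjTranspose_mul,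
      Matrix.conjTranspose_mul, Matrix.conjTranspose_conjTranspose, hD.eq, mul_assoc]
  rw [vN, dif_pos hA]
  exact sum_f_eigenvalues hA U d hU hAd ent2

def blk {F G : Type*} [DecidableEq F] (V : F → Matrix G G ℂ) : Matrix (F × G) (F × G) ℂ :=
  Matrix.of fun x y => if x.1 = y.1 then V x.1 x.2 y.2 else 0

lemma blk_mul {F G : Type*} [Fintype F] [Fintype G] [DecidableEq F] (V W : F → Matrix G G ℂ) :
    blk V * blk W = blk (fun i => V i * W i) := by
  ext ⟨i, a⟩ ⟨j, b⟩
  simp only [blk, Matrix.mul_apply, Matrix.of_apply, Fintype.sum_prod_type, ite_mul, zero_mul,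
    mul_ite, mul_zero]
  rcases eq_or_ne i j with rfl | hij
  · simp [Finset.sum_ite_eq' Finset.univ i]
  · rw [if_neg hij]
    refine Finset.sum_eq_zero fun k _ => ?_
    by_cases h1 : i = k
    · subst h1; simp [hij]
    · simp [h1]

lemma blk_star {F G : Type*} [Fintype F] [Fintype G] [DecidableEq F] (V : F → Matrix G G ℂ) :
    star (blk V) = blk (fun i => star (V i)) := by
  ext ⟨i, a⟩ ⟨j, b⟩
  simp only [Matrix.star_eq_conjTranspose, Matrix.conjTranspose_apply, blk, Matrix.of_apply]
  rcases eq_or_ne i j with rfl | hij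
  · simp
  · simp [hij, Ne.symm hij]

lemma blk_one {F G : Type*} [Fintype F] [Fintype G] [DecidableEq F] [DecidableEq G] :
    blk (fun _ : F => (1 : Matrix G G ℂ)) = 1 := by
  ext ⟨i, a⟩ ⟨j, b⟩
  simp only [blk, Matrix.of_apply, Matrix.one_apply, Prod.mk.injEq]
  rcases eq_or_ne i j with rfl | hij
  · by_cases hab : a = b <;> simp [hab]
  · simp [hij]

lemma blk_diagonal {F G : Type*} [Fintype F] [Fintype G] [DecidableEq F] [DecidableEq G]
    (g : F → G → ℂ) :
    blk (fun i => Matrix.diagonal (g i)) = Matrix.diagonal (fun x : F × G => g x.1 x.2) := by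
  ext ⟨i, a⟩ ⟨j, b⟩
  simp only [blk, Matrix.of_apply, Matrix.diagonal_apply, Prod.mk.injEq]
  rcases eq_or_ne i j with rfl | hij
  · by_cases hab : a = b <;> simp [hab]
  · simp [hij]

lemma trace_of_diag {n : Type*} [Fintype n] [DecidableEq n] {A U : Matrix n n ℂ} {d : n → ℝ}
    (hU : U * star U = 1) (hAd : A = U * Matrix.diagonal (fun i => (d i : ℂ)) * star U) :
    A.trace = ∑ i, (d i : ℂ) := by
  rw [hAd, Matrix.trace_mul_cycle, _root_.mul_eq_one_comm.mp hU, one_mul, Matrix.trace_diagonal]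

end Aux

/-- Quantum mutual entropy of a classical–quantum state equals the Holevo quantity. -/
theorem cq_mutual_entropy_eq_holevo {F : Type*} [Fintype F] [DecidableEq F] {d : ℕ}
    (p : F → ℝ) (hp : ∀ i, 0 ≤ p i) (hp1 : ∑ i, p i = 1)
    (ρ : F → Matrix (Fin d) (Fin d) ℂ) (hρ : ∀ i, (ρ i).PosSemidef)
    (htr : ∀ i, (ρ i).trace = 1) :
    vN (ptraceSnd (cqState p ρ)) + vN (ptraceFst (cqState p ρ)) - vN (cqState p ρ)
      = vN (∑ i, (p i : ℂ) • ρ i) - ∑ i, p i * vN (ρ i) := by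
  classical
  have hherm : ∀ i, (ρ i).IsHermitian := fun i => (hρ i).1
  set lam : F → Fin d → ℝ := fun i => (hherm i).eigenvalues with hlam
  set V : F → Matrix (Fin d) (Fin d) ℂ :=
    fun i => ((hherm i).eigenvectorUnitary : Matrix (Fin d) (Fin d) ℂ) with hVdef
  have hVU : ∀ i, V i * star (V i) = 1 := fun i =>
    (Matrix.mem_unitaryGroup_iff).mp (hherm i).eigenvectorUnitary.2
  have hspec : ∀ i, ρ i = V i * Matrix.diagonal (fun k => ((lam i k : ℝ) : ℂ)) * star (V i) :=
    fun i => (hherm i).spectral_theorem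
  -- eigenvalues of each ρ i sum to 1
  have hsum1 : ∀ i, ∑ k, lam i k = 1 := by
    intro i
    have h := trace_of_diag (hVU i) (hspec i)
    rw [htr i] at h
    exact_mod_cast h.symm
  -- vN of each ρ i
  have hvρ : ∀ i, vN (ρ i) = ∑ k, ent2 (lam i k) := fun i => vN_of_diag (hVU i) (hspec i)
  -- ptraceSnd
  have hR : ptraceSnd (cqState p ρ) = Matrix.diagonal (fun i : F => (p i : ℂ)) := by
    ext i j
    simp only [ptraceSnd, cqState, Matrix.of_apply, Matrix.diagonal_apply]
    rcases eq_or_ne i j with rfl | hij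
    · have h : (∑ k : Fin d, ρ i k k) = 1 := by simpa [Matrix.trace, Matrix.diag] using htr i
      simp [← Finset.mul_sum, h]
    · simp [hij]
  have hvR : vN (ptraceSnd (cqState p ρ)) = ∑ i, ent2 (p i) := by
    rw [hR]
    exact vN_of_diag (U := 1) (by simp) (by simp)
  -- ptraceFst
  have hE : ptraceFst (cqState p ρ) = ∑ i, (p i : ℂ) • ρ i := by
    ext x y
    simp [ptraceFst, cqState, Matrix.sum_apply]
  -- the cq state is block diagonal
  have hcq : cqState p ρ = blk (fun i => (p i : ℂ) • ρ i) := by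
    ext ⟨i, a⟩ ⟨j, b⟩
    simp [cqState, blk]
  have hblock : ∀ i, (p i : ℂ) • ρ i
      = V i * Matrix.diagonal (fun k => ((p i * lam i k : ℝ) : ℂ)) * star (V i) := by
    intro i
    have hdiag : Matrix.diagonal (fun k => ((p i * lam i k : ℝ) : ℂ))
        = (p i : ℂ) • Matrix.diagonal (fun k => ((lam i k : ℝ) : ℂ)) := by
      have hfun : (fun k => ((p i * lam i k : ℝ) : ℂ))
          = (p i : ℂ) • (fun k => ((lam i k : ℝ) : ℂ)) := by
        funext k
        simp only [Pi.smul_apply, smul_eq_mul]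
        push_cast
        ring
      rw [hfun, Matrix.diagonal_smul]
    conv_rhs => rw [hdiag, Matrix.mul_smul, Matrix.smul_mul]
    rw [← hspec i]
  have hU : blk V * star (blk V) = 1 := by
    rw [blk_star, blk_mul]
    have h1 : (fun i => V i * star (V i)) = fun _ : F => (1 : Matrix (Fin d) (Fin d) ℂ) := by
      funext i
      exact hVU i
    rw [h1, blk_one]
  have hThd : cqState p ρ
      = blk V * Matrix.diagonal (fun x : F × Fin d => ((p x.1 * lam x.1 x.2 : ℝ) : ℂ))
        * star (blk V) := by
    rw [hcq, blk_star,
      show (Matrix.diagonal fun x : F × Fin d => ((p x.1 * lam x.1 x.2 : ℝ) : ℂ))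
          = blk (fun i => Matrix.diagonal (fun k => ((p i * lam i k : ℝ) : ℂ)))
        from (blk_diagonal (fun i k => ((p i * lam i k : ℝ) : ℂ))).symm,
      blk_mul, blk_mul]
    have h2 : (fun i => (p i : ℂ) • ρ i)
        = fun i => V i * Matrix.diagonal (fun k => ((p i * lam i k : ℝ) : ℂ)) * star (V i) :=
      funext hblock
    rw [h2]
  have hvTh : vN (cqState p ρ) = ∑ x : F × Fin d, ent2 (p x.1 * lam x.1 x.2) :=
    vN_of_diag hU hThd
  rw [hvR, hvTh, hE]
  have hsplit : ∑ x : F × Fin d, ent2 (p x.1 * lam x.1 x.2)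
      = ∑ i, (p i * (∑ k, ent2 (lam i k)) + ent2 (p i)) := by
    rw [Fintype.sum_prod_type]
    refine Finset.sum_congr rfl fun i _ => ?_
    calc ∑ k, ent2 (p i * lam i k)
        = ∑ k, (p i * ent2 (lam i k) + lam i k * ent2 (p i)) :=
          Finset.sum_congr rfl fun k _ => ent2_mul _ _
      _ = p i * (∑ k, ent2 (lam i k)) + (∑ k, lam i k) * ent2 (p i) := by
          rw [Finset.sum_add_distrib, Finset.mul_sum, Finset.sum_mul]
      _ = p i * (∑ k, ent2 (lam i k)) + ent2 (p i) := by rw [hsum1 i, one_mul]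
  rw [hsplit, Finset.sum_add_distrib]
  have hfin : ∑ i, p i * vN (ρ i) = ∑ i, p i * ∑ k, ent2 (lam i k) :=
    Finset.sum_congr rfl fun i _ => by rw [hvρ i]
  rw [hfin]
  ring

end IDT
end
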